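/- (Best linear predictor / BLUP.) Assume the matrix Q = F S Fᵀ + R is invertible, and set A* = S Fᵀ Q⁻¹. Then A* minimizes the mean squared prediction error among all linear predictors: for every real M×N matrix A, E[‖ξ − A*(U − μ₀)‖²] ≤ E[‖ξ − A(U − μ₀)‖²]. -/

import Mathlib

open Matrix

open MeasureTheory in
lemma l2_mul_integrable {Ω : Type*} [MeasurableSpace Ω] {P : Measure Ω}
    {f g : Ω → ℝ} (hf : MemLp f 2 P) (hg : MemLp g 2 P) :
    Integrable (fun ω => f ω * g ω) P := by
  have h := (((hf.add hg).integrable_sq.sub hf.integrable_sq).sub hg.integrable_sq).div_const 2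
  exact h.congr (Filter.Eventually.of_forall fun ω => by simp; ring)

lemma diag_nonneg' {n : ℕ} {Q : Matrix (Fin n) (Fin n) ℝ} (h : Q.PosSemidef) (a : Fin n) :
    0 ≤ Q a a := by
  have := h.diag_nonneg (i := a)
  simpa [Matrix.mulVec_single, single_dotProduct] using this

open MeasureTheory in
lemma aux_int (Ω : Type*) [MeasurableSpace Ω] (P : Measure Ω) [IsProbabilityMeasure P]
    (M N : ℕ) (ξ : Ω → Fin M → ℝ) (ε : Ω → Fin N → ℝ)
    (hξ2 : ∀ a : Fin M, MemLp (fun ω => ξ ω a) 2 P)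
    (hε2 : ∀ b : Fin N, MemLp (fun ω => ε ω b) 2 P)
    (S : Matrix (Fin M) (Fin M) ℝ) (hS : ∀ a b : Fin M, (∫ ω, ξ ω a * ξ ω b ∂P) = S a b)
    (R : Matrix (Fin N) (Fin N) ℝ) (hR : ∀ a b : Fin N, (∫ ω, ε ω a * ε ω b ∂P) = R a b)
    (hcross : ∀ (a : Fin M) (b : Fin N), (∫ ω, ξ ω a * ε ω b ∂P) = 0)
    (B : Matrix (Fin M) (Fin M) ℝ) (C : Matrix (Fin M) (Fin N) ℝ) (a : Fin M) :
    (∫ ω, (∑ c, B a c * ξ ω c + ∑ b, C a b * ε ω b)^2 ∂P)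
      = (B*S*Bᵀ) a a + (C*R*Cᵀ) a a := by
  have hpt : ∀ ω, (∑ c, B a c * ξ ω c + ∑ b, C a b * ε ω b)^2
      = (∑ c, ∑ c', (B a c * B a c') * (ξ ω c * ξ ω c'))
      + ((∑ c, ∑ b, (2 * (B a c * C a b)) * (ξ ω c * ε ω b))
      + (∑ b, ∑ b', (C a b * C a b') * (ε ω b * ε ω b'))) := by
    intro ω
    have e1 : (∑ c, ∑ c', (B a c * B a c') * (ξ ω c * ξ ω c'))
        = (∑ c, B a c * ξ ω c) * (∑ c', B a c' * ξ ω c') := by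
      rw [Finset.sum_mul_sum]
      exact Finset.sum_congr rfl fun c _ => Finset.sum_congr rfl fun c' _ => by ring
    have e2 : (∑ c, ∑ b, (2 * (B a c * C a b)) * (ξ ω c * ε ω b))
        = 2 * ((∑ c, B a c * ξ ω c) * (∑ b, C a b * ε ω b)) := by
      rw [Finset.sum_mul_sum, Finset.mul_sum]
      exact Finset.sum_congr rfl fun c _ => by
        rw [Finset.mul_sum]
        exact Finset.sum_congr rfl fun b _ => by ring
    have e3 : (∑ b, ∑ b', (C a b * C a b') * (ε ω b * ε ω b'))
        = (∑ b, C a b * ε ω b) * (∑ b', C a b' * ε ω b') := by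
      rw [Finset.sum_mul_sum]
      exact Finset.sum_congr rfl fun b _ => Finset.sum_congr rfl fun b' _ => by ring
    rw [e1, e2, e3]; ring
  have I1 : ∀ (c c' : Fin M), Integrable (fun ω => (B a c * B a c') * (ξ ω c * ξ ω c')) P :=
    fun c c' => (l2_mul_integrable (hξ2 c) (hξ2 c')).const_mul _
  have I2 : ∀ (c : Fin M) (b : Fin N),
      Integrable (fun ω => (2 * (B a c * C a b)) * (ξ ω c * ε ω b)) P :=
    fun c b => (l2_mul_integrable (hξ2 c) (hε2 b)).const_mul _
  have I3 : ∀ (b b' : Fin N), Integrable (fun ω => (C a b * C a b') * (ε ω b * ε ω b')) P :=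
    fun b b' => (l2_mul_integrable (hε2 b) (hε2 b')).const_mul _
  have J1 : Integrable (fun ω => ∑ c, ∑ c', (B a c * B a c') * (ξ ω c * ξ ω c')) P :=
    integrable_finset_sum _ fun c _ => integrable_finset_sum _ fun c' _ => I1 c c'
  have J2 : Integrable (fun ω => ∑ c, ∑ b, (2 * (B a c * C a b)) * (ξ ω c * ε ω b)) P :=
    integrable_finset_sum _ fun c _ => integrable_finset_sum _ fun b _ => I2 c b
  have J3 : Integrable (fun ω => ∑ b, ∑ b', (C a b * C a b') * (ε ω b * ε ω b')) P :=
    integrable_finset_sum _ fun b _ => integrable_finset_sum _ fun b' _ => I3 b b'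
  calc (∫ ω, (∑ c, B a c * ξ ω c + ∑ b, C a b * ε ω b)^2 ∂P)
      = ∫ ω, ((∑ c, ∑ c', (B a c * B a c') * (ξ ω c * ξ ω c'))
        + ((∑ c, ∑ b, (2 * (B a c * C a b)) * (ξ ω c * ε ω b))
        + (∑ b, ∑ b', (C a b * C a b') * (ε ω b * ε ω b')))) ∂P := by
        exact integral_congr_ae (Filter.Eventually.of_forall hpt)
    _ = (∫ ω, ∑ c, ∑ c', (B a c * B a c') * (ξ ω c * ξ ω c') ∂P)
        + ((∫ ω, ∑ c, ∑ b, (2 * (B a c * C a b)) * (ξ ω c * ε ω b) ∂P)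
        + (∫ ω, ∑ b, ∑ b', (C a b * C a b') * (ε ω b * ε ω b') ∂P)) := by
        have J23 : Integrable (fun ω => (∑ c, ∑ b, (2 * (B a c * C a b)) * (ξ ω c * ε ω b))
          + (∑ b, ∑ b', (C a b * C a b') * (ε ω b * ε ω b'))) P := J2.add J3
        rw [integral_add J1 J23, integral_add J2 J3]
    _ = (∑ c, ∑ c', (B a c * B a c') * S c c')
        + ((∑ c, ∑ b, (2 * (B a c * C a b)) * 0)
        + (∑ b, ∑ b', (C a b * C a b') * R b b')) := by
        congr 1
        · rw [integral_finset_sum _ fun c _ => integrable_finset_sum _ fun c' _ => I1 c c']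
          refine Finset.sum_congr rfl fun c _ => ?_
          rw [integral_finset_sum _ fun c' _ => I1 c c']
          refine Finset.sum_congr rfl fun c' _ => ?_
          rw [integral_const_mul, hS]
        congr 1
        · rw [integral_finset_sum _ fun c _ => integrable_finset_sum _ fun b _ => I2 c b]
          refine Finset.sum_congr rfl fun c _ => ?_
          rw [integral_finset_sum _ fun b _ => I2 c b]
          refine Finset.sum_congr rfl fun b _ => ?_
          rw [integral_const_mul, hcross]
        · rw [integral_finset_sum _ fun b _ => integrable_finset_sum _ fun b' _ => I3 b b']
          refine Finset.sum_congr rfl fun b _ => ?_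
          rw [integral_finset_sum _ fun b' _ => I3 b b']
          refine Finset.sum_congr rfl fun b' _ => ?_
          rw [integral_const_mul, hR]
    _ = (B*S*Bᵀ) a a + (C*R*Cᵀ) a a := by
        simp only [mul_zero, Finset.sum_const_zero, zero_add, Matrix.mul_apply,
          Matrix.transpose_apply, Finset.sum_mul]
        congr 1
        · rw [Finset.sum_comm]
          exact Finset.sum_congr rfl fun c _ => Finset.sum_congr rfl fun c' _ => by ring
        · rw [Finset.sum_comm]
          exact Finset.sum_congr rfl fun b _ => Finset.sum_congr rfl fun b' _ => by ring

lemma ptwise (M N : ℕ) (Ω : Type*) (ξ : Ω → Fin M → ℝ) (ε : Ω → Fin N → ℝ)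
    (F : Matrix (Fin N) (Fin M) ℝ) (μ₀ : Fin N → ℝ) (U : Ω → Fin N → ℝ)
    (hU : ∀ ω, U ω = μ₀ + F.mulVec (ξ ω) + ε ω)
    (A : Matrix (Fin M) (Fin N) ℝ) (ω : Ω) (a : Fin M) :
    ξ ω a - A.mulVec (fun b => U ω b - μ₀ b) a
      = ∑ c, ((1 : Matrix (Fin M) (Fin M) ℝ) - A*F) a c * ξ ω c + ∑ b, (-A) a b * ε ω b := by
  simp only [hU, Pi.add_apply, Matrix.mulVec, dotProduct, Matrix.sub_apply,
    Matrix.one_apply, Matrix.mul_apply, Matrix.neg_apply, sub_mul, neg_mul,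
    Finset.sum_sub_distrib, Finset.sum_ite_eq, Finset.mem_univ, if_true,
    Finset.sum_mul, Finset.sum_neg_distrib]
  rw [Finset.sum_comm (f := fun x i => A a i * F i x * ξ ω x)]
  simp only [ite_mul, one_mul, zero_mul, Finset.sum_ite_eq, Finset.mem_univ, if_true]
  have : ∀ x : Fin N, A a x * (μ₀ x + ∑ x_1 : Fin M, F x x_1 * ξ ω x_1 + ε ω x - μ₀ x)
      = ∑ x_1 : Fin M, A a x * F x x_1 * ξ ω x_1 + A a x * ε ω x := by
    intro x
    have h0 : μ₀ x + ∑ x_1 : Fin M, F x x_1 * ξ ω x_1 + ε ω x - μ₀ x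
        = (∑ x_1 : Fin M, F x x_1 * ξ ω x_1) + ε ω x := by ring
    rw [h0, mul_add, Finset.mul_sum]
    congr 1
    exact Finset.sum_congr rfl fun c _ => by ring
  simp only [this, Finset.sum_add_distrib]
  ring

lemma mat_ineq (M N : ℕ) (S : Matrix (Fin M) (Fin M) ℝ) (R : Matrix (Fin N) (Fin N) ℝ)
    (F : Matrix (Fin N) (Fin M) ℝ) (hSpsd : S.PosSemidef) (hRpsd : R.PosSemidef)
    (hQ : IsUnit (F * S * Fᵀ + R)) (A : Matrix (Fin M) (Fin N) ℝ) :
    (∑ a : Fin M, ((((1 : Matrix (Fin M) (Fin M) ℝ) - (S * Fᵀ * (F * S * Fᵀ + R)⁻¹)*F) * S *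
        ((1 : Matrix (Fin M) (Fin M) ℝ) - (S * Fᵀ * (F * S * Fᵀ + R)⁻¹)*F)ᵀ) a a
      + (((-(S * Fᵀ * (F * S * Fᵀ + R)⁻¹)) * R * (-(S * Fᵀ * (F * S * Fᵀ + R)⁻¹))ᵀ) a a)))
    ≤ ∑ a : Fin M, ((((1 : Matrix (Fin M) (Fin M) ℝ) - A*F) * S *
        ((1 : Matrix (Fin M) (Fin M) ℝ) - A*F)ᵀ) a a + (((-A) * R * (-A)ᵀ) a a)) := by
  have hSsym : Sᵀ = S := by
    have := hSpsd.isHermitian.eq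
    rwa [conjTranspose_eq_transpose_of_trivial] at this
  have hRsym : Rᵀ = R := by
    have := hRpsd.isHermitian.eq
    rwa [conjTranspose_eq_transpose_of_trivial] at this
  set Q := F * S * Fᵀ + R with hQdef
  set A₀ := S * Fᵀ * Q⁻¹ with hA₀def
  have hQsym : Qᵀ = Q := by
    rw [hQdef, transpose_add, transpose_mul, transpose_mul, transpose_transpose, hSsym, hRsym,
      Matrix.mul_assoc]
  have hQdet : IsUnit Q.det := (Matrix.isUnit_iff_isUnit_det _).mp hQ
  have hQinv : Q * Q⁻¹ = 1 := Matrix.mul_nonsing_inv _ hQdet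
  have hinvQ : Q⁻¹ * Q = 1 := Matrix.nonsing_inv_mul _ hQdet
  have hA₀Q : A₀ * Q = S * Fᵀ := by rw [hA₀def, Matrix.mul_assoc, hinvQ, Matrix.mul_one]
  have hA₀T : A₀ᵀ = Q⁻¹ * (F * S) := by
    rw [hA₀def, transpose_mul, transpose_mul, transpose_transpose, hSsym,
      Matrix.transpose_nonsing_inv, hQsym]
  have hQA₀T : Q * A₀ᵀ = F * S := by rw [hA₀T, ← Matrix.mul_assoc, hQinv, Matrix.one_mul]
  have hQpsd : Q.PosSemidef := by
    have h1 := hSpsd.mul_mul_conjTranspose_same F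
    rw [conjTranspose_eq_transpose_of_trivial] at h1
    exact h1.add hRpsd
  have phi : ∀ X : Matrix (Fin M) (Fin N) ℝ,
      ((1 : Matrix (Fin M) (Fin M) ℝ) - X*F) * S * ((1 : Matrix (Fin M) (Fin M) ℝ) - X*F)ᵀ
        + X*R*Xᵀ = S - X*(F*S) - (S*Fᵀ)*Xᵀ + X*Q*Xᵀ := by
    intro X
    have hq : X*Q*Xᵀ = X*(F*S)*(Fᵀ*Xᵀ) + X*R*Xᵀ := by
      rw [hQdef, Matrix.mul_add, Matrix.add_mul, ← Matrix.mul_assoc X (F*S) Fᵀ,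
        Matrix.mul_assoc (X*(F*S)) Fᵀ Xᵀ]
    rw [hq, transpose_sub, transpose_one, transpose_mul]
    simp only [Matrix.sub_mul, Matrix.mul_sub, Matrix.one_mul, Matrix.mul_one, Matrix.mul_assoc]
    abel
  have main : ((1 : Matrix (Fin M) (Fin M) ℝ) - A*F) * S * ((1 : Matrix (Fin M) (Fin M) ℝ) - A*F)ᵀ
      + A*R*Aᵀ = (A - A₀)*Q*(A - A₀)ᵀ
      + (((1 : Matrix (Fin M) (Fin M) ℝ) - A₀*F) * S * ((1 : Matrix (Fin M) (Fin M) ℝ) - A₀*F)ᵀ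
      + A₀*R*A₀ᵀ) := by
    rw [phi A, phi A₀]
    have hD : (A - A₀)*Q*(A - A₀)ᵀ = A*Q*Aᵀ - A*(F*S) - (S*Fᵀ)*Aᵀ + (S*Fᵀ)*A₀ᵀ := by
      rw [transpose_sub]
      simp only [Matrix.sub_mul, Matrix.mul_sub]
      simp only [hA₀Q]
      rw [Matrix.mul_assoc A Q A₀ᵀ, hQA₀T]
      abel
    have h1 : A₀*(F*S) = (S*Fᵀ)*A₀ᵀ := by rw [← hQA₀T, ← Matrix.mul_assoc, hA₀Q]
    have h2 : A₀*Q*A₀ᵀ = (S*Fᵀ)*A₀ᵀ := by rw [hA₀Q]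
    rw [hD, h2, h1]
    abel
  have hneg : ∀ X : Matrix (Fin M) (Fin N) ℝ, (-X) * R * (-X)ᵀ = X*R*Xᵀ := by
    intro X
    simp [transpose_neg, Matrix.neg_mul, Matrix.mul_neg]
  have hDpsd : ((A - A₀)*Q*(A - A₀)ᵀ).PosSemidef := by
    have h1 := hQpsd.mul_mul_conjTranspose_same (A - A₀)
    rwa [conjTranspose_eq_transpose_of_trivial] at h1
  calc (∑ a : Fin M, ((((1 : Matrix (Fin M) (Fin M) ℝ) - A₀*F) * S *
        ((1 : Matrix (Fin M) (Fin M) ℝ) - A₀*F)ᵀ) a a + (((-A₀) * R * (-A₀)ᵀ) a a)))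
      ≤ ∑ a : Fin M, (((A - A₀)*Q*(A - A₀)ᵀ) a a
        + ((((1 : Matrix (Fin M) (Fin M) ℝ) - A₀*F) * S *
        ((1 : Matrix (Fin M) (Fin M) ℝ) - A₀*F)ᵀ) a a + (((-A₀) * R * (-A₀)ᵀ) a a))) := by
        refine Finset.sum_le_sum fun a _ => ?_
        have := diag_nonneg' hDpsd a
        linarith
    _ = ∑ a : Fin M, ((((1 : Matrix (Fin M) (Fin M) ℝ) - A*F) * S *
        ((1 : Matrix (Fin M) (Fin M) ℝ) - A*F)ᵀ) a a + (((-A) * R * (-A)ᵀ) a a)) := by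
        refine Finset.sum_congr rfl fun a _ => ?_
        rw [hneg, hneg]
        rw [show (((A - A₀)*Q*(A - A₀)ᵀ) a a
          + ((((1 : Matrix (Fin M) (Fin M) ℝ) - A₀*F) * S *
          ((1 : Matrix (Fin M) (Fin M) ℝ) - A₀*F)ᵀ) a a + ((A₀ * R * A₀ᵀ) a a)))
          = ((A - A₀)*Q*(A - A₀)ᵀ
          + (((1 : Matrix (Fin M) (Fin M) ℝ) - A₀*F) * S *
          ((1 : Matrix (Fin M) (Fin M) ℝ) - A₀*F)ᵀ + A₀ * R * A₀ᵀ)) a a from rfl]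
        rw [← main]
        rfl

theorem stmt12 (Ω : Type*)
    [MeasurableSpace Ω] (P : MeasureTheory.Measure Ω) [MeasureTheory.IsProbabilityMeasure P]
    (M N : ℕ) (ξ : Ω → Fin M → ℝ) (ε : Ω → Fin N → ℝ)
    (hξ2 : ∀ a : Fin M, MeasureTheory.MemLp (fun ω => ξ ω a) 2 P)
    (hε2 : ∀ b : Fin N, MeasureTheory.MemLp (fun ω => ε ω b) 2 P)
    (hξ0 : ∀ a : Fin M, (∫ ω, ξ ω a ∂P) = 0)
    (hε0 : ∀ b : Fin N, (∫ ω, ε ω b ∂P) = 0)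
    (S : Matrix (Fin M) (Fin M) ℝ) (hS : ∀ a b : Fin M, (∫ ω, ξ ω a * ξ ω b ∂P) = S a b)
    (R : Matrix (Fin N) (Fin N) ℝ) (hR : ∀ a b : Fin N, (∫ ω, ε ω a * ε ω b ∂P) = R a b)
    (hcross : ∀ (a : Fin M) (b : Fin N), (∫ ω, ξ ω a * ε ω b ∂P) = 0)
    (F : Matrix (Fin N) (Fin M) ℝ) (μ₀ : Fin N → ℝ) (U : Ω → Fin N → ℝ)
    (hU : ∀ ω, U ω = μ₀ + F.mulVec (ξ ω) + ε ω)
    (hSpsd : S.PosSemidef) (hRpsd : R.PosSemidef)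
    (hQ : IsUnit (F * S * Fᵀ + R)) :
    ∀ A : Matrix (Fin M) (Fin N) ℝ,
      (∫ ω, ∑ a : Fin M,
          (ξ ω a - (S * Fᵀ * (F * S * Fᵀ + R)⁻¹).mulVec (fun b => U ω b - μ₀ b) a) ^ 2 ∂P) ≤
        (∫ ω, ∑ a : Fin M, (ξ ω a - A.mulVec (fun b => U ω b - μ₀ b) a) ^ 2 ∂P) := by
  intro A
  have key : ∀ (A' : Matrix (Fin M) (Fin N) ℝ),
      (∫ ω, ∑ a : Fin M, (ξ ω a - A'.mulVec (fun b => U ω b - μ₀ b) a) ^ 2 ∂P)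
        = ∑ a : Fin M, ((((1 : Matrix (Fin M) (Fin M) ℝ) - A'*F) * S *
            ((1 : Matrix (Fin M) (Fin M) ℝ) - A'*F)ᵀ) a a + (((-A') * R * (-A')ᵀ) a a)) := by
    intro A'
    have hmem : ∀ a : Fin M, MeasureTheory.MemLp
        (fun ω => ∑ c, ((1 : Matrix (Fin M) (Fin M) ℝ) - A'*F) a c * ξ ω c
          + ∑ b, (-A') a b * ε ω b) 2 P := by
      intro a
      refine MeasureTheory.MemLp.add ?_ ?_
      · exact MeasureTheory.memLp_finsetSum _ fun c _ => (hξ2 c).const_mul _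
      · exact MeasureTheory.memLp_finsetSum _ fun b _ => (hε2 b).const_mul _
    calc (∫ ω, ∑ a : Fin M, (ξ ω a - A'.mulVec (fun b => U ω b - μ₀ b) a) ^ 2 ∂P)
        = ∫ ω, ∑ a : Fin M, (∑ c, ((1 : Matrix (Fin M) (Fin M) ℝ) - A'*F) a c * ξ ω c
            + ∑ b, (-A') a b * ε ω b) ^ 2 ∂P := by
          refine MeasureTheory.integral_congr_ae (Filter.Eventually.of_forall fun ω => ?_)
          exact Finset.sum_congr rfl fun a _ => by
            rw [ptwise M N Ω ξ ε F μ₀ U hU A' ω a]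
      _ = ∑ a : Fin M, ∫ ω, (∑ c, ((1 : Matrix (Fin M) (Fin M) ℝ) - A'*F) a c * ξ ω c
            + ∑ b, (-A') a b * ε ω b) ^ 2 ∂P :=
          MeasureTheory.integral_finset_sum _ fun a _ => (hmem a).integrable_sq
      _ = ∑ a : Fin M, ((((1 : Matrix (Fin M) (Fin M) ℝ) - A'*F) * S *
            ((1 : Matrix (Fin M) (Fin M) ℝ) - A'*F)ᵀ) a a + (((-A') * R * (-A')ᵀ) a a)) :=
          Finset.sum_congr rfl fun a _ =>
            aux_int Ω P M N ξ ε hξ2 hε2 S hS R hR hcross _ _ a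
  rw [key A, key (S * Fᵀ * (F * S * Fᵀ + R)⁻¹)]
  exact mat_ineq M N S R F hSpsd hRpsd hQ A
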